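/- Let L be an even unimodular lattice, let M0 ⊆ L be a primitive sublattice, and let L2 = L ⊕ ℤe be the orthogonal direct sum with (e,e) = -2; set M = M0 ⊕ ℤe ⊆ L2. Suppose δ = d + a·e with d ∈ M0 and a ∈ ℤ satisfies either (i) (δ,δ) = -2, or (ii) (δ,δ) = -10 and (δ,x) ∈ 2ℤ for all x ∈ L2. Then at least one of the following holds: (1) (d,d) ≥ 0; (2) (d,d) = -2; (3) there exists d' ∈ M0 with 2d' = d and (d',d') = -2. -/
import Mathlib


/-- Lemma 2.8 of the paper, abstract form.
`L` is an even unimodular lattice (finitely generated free ℤ-module with a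
nondegenerate — here even bijective, i.e. unimodular — integral symmetric
bilinear form `B`).  `M0 ⊆ L` is a primitive sublattice (the quotient is
torsion-free).  The lattice `L2 = L ⊕ ℤe` with `(e,e) = -2` has bilinear form
`B2((x,s),(y,t)) = B x y - 2*s*t`, so for `δ = d + a·e` we have
`(δ,δ) = B d d - 2*a*a` and `(δ, y + b·e) = B d y - 2*a*b`.
If `(δ,δ) = -2`, or `(δ,δ) = -10` and `(δ,x) ∈ 2ℤ` for all `x ∈ L2`, then
`(d,d) ≥ 0`, or `(d,d) = -2`, or `d = 2d'` with `d' ∈ M0` and `(d',d') = -2`. -/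
theorem lemma_2_8
    {L : Type*} [AddCommGroup L] [Module ℤ L] [Module.Free ℤ L] [Module.Finite ℤ L]
    (B : L →ₗ[ℤ] L →ₗ[ℤ] ℤ)
    (hsymm : ∀ x y : L, B x y = B y x)
    (hunimod : Function.Bijective (fun x : L => B x))
    (heven : ∀ x : L, 2 ∣ B x x)
    (M0 : Submodule ℤ L)
    (hprim : ∀ (x : L) (n : ℤ), n ≠ 0 → n • x ∈ M0 → x ∈ M0)
    (d : L) (hd : d ∈ M0) (a : ℤ)
    (hδ : (B d d - 2 * a * a = -2) ∨
          (B d d - 2 * a * a = -10 ∧ ∀ (y : L) (b : ℤ), 2 ∣ (B d y - 2 * a * b))) :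
    0 ≤ B d d ∨ B d d = -2 ∨ ∃ d' ∈ M0, 2 • d' = d ∧ B d' d' = -2 := by
  rcases hδ with h | ⟨h, hdiv⟩
  · -- case (δ,δ) = -2 : B d d = 2a² - 2
    rcases eq_or_ne a 0 with rfl | ha
    · right; left; linarith
    · left
      rcases lt_or_gt_of_ne ha with h' | h' <;> nlinarith
  · -- case (δ,δ) = -10 with the evenness condition
    -- taking b = 0 in the divisibility condition: 2 ∣ B d y for all y
    have hdiv' : ∀ y : L, 2 ∣ B d y := by
      intro y
      have := hdiv y 0
      simpa using this
    -- by unimodularity all coordinates of d are even, so d = 2 d'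
    let b := Module.Free.chooseBasis ℤ L
    have hc : ∀ i, 2 ∣ b.repr d i := by
      intro i
      obtain ⟨f, hf⟩ := hunimod.2 (b.coord i)
      have hf' : B f = b.coord i := hf
      have h1 : b.repr d i = B f d := by
        rw [hf', Module.Basis.coord_apply]
      rw [h1, ← hsymm]
      exact hdiv' f
    set d' : L := ∑ i, (b.repr d i / 2) • b i with hd'
    have h2 : d' + d' = d := by
      conv_rhs => rw [← b.sum_repr d]
      rw [hd', ← Finset.sum_add_distrib]
      refine Finset.sum_congr rfl fun i _ => ?_
      simp only [← Int.cast_smul_eq_zsmul ℤ, Int.cast_id]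
      rw [← add_smul]
      congr 1
      have := hc i
      omega
    have hBd : B d d = 4 * B d' d' := by
      rw [← h2]
      simp only [map_add, LinearMap.add_apply]
      ring
    have hBdd : B d d = 2 * a * a - 10 := by linarith
    -- 4 ∣ 2a² - 10 forces a to be odd
    have hodd : Odd a := by
      by_contra hev
      rw [Int.not_odd_iff_even] at hev
      obtain ⟨m, hm⟩ := hev
      have he : 8 * (m * m) = 4 * (B d' d') + 10 := by
        subst hm; linear_combination hBd - h
      omega
    obtain ⟨m, hm⟩ := hodd
    have key : a * a = 1 ∨ 9 ≤ a * a := by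
      rcases le_or_gt m (-2) with hm' | hm'
      · right; nlinarith
      rcases le_or_gt 1 m with hm'' | hm''
      · right; nlinarith
      · left
        interval_cases m <;> subst hm <;> ring
    rcases key with hk | hk
    · -- a² = 1 : B d d = -8, so B d' d' = -2 and d = 2 d'
      right; right
      have hz : (2 : ℤ) • d' = d := by
        simp only [← Int.cast_smul_eq_zsmul ℤ, Int.cast_id, two_smul]
        exact h2
      have hmem : d' ∈ M0 := hprim d' 2 (by norm_num) (hz ▸ hd)
      have hn : (2 : ℕ) • d' = d := by
        rw [two_smul]
        exact h2
      exact ⟨d', hmem, hn, by nlinarith⟩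
    · left; nlinarith
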